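/- Let A and B be 2×2 real matrices, and let 𝔤 be the Lie subalgebra of gl(2,ℝ) generated by the set {A + u·B : u ∈ ℝ} (with Lie bracket [X,Y] = XY − YX). Then the following are equivalent: (i) for every nonzero x ∈ ℝ², the linear span of {M·x : M ∈ 𝔤} is all of ℝ² (the Lie algebra rank condition); (ii) there exist matrices Ã and B̃ in 𝔤 such that tr(adj(Ã)·B̃)² − 4·det(adj(Ã)·B̃) < 0, where adj denotes the adjugate (classical adjoint) matrix. -/

import Mathlib

open Matrix Module

namespace LarcAux

abbrev Mat := Matrix (Fin 2) (Fin 2) ℝ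

/-- The cross product (determinant) of two plane vectors. -/
def cross (u v : Fin 2 → ℝ) : ℝ := u 0 * v 1 - u 1 * v 0

lemma mulVec0 (M : Mat) (x : Fin 2 → ℝ) : M.mulVec x 0 = M 0 0 * x 0 + M 0 1 * x 1 := by
  simp [Matrix.mulVec, dotProduct, Fin.sum_univ_two]

lemma mulVec1 (M : Mat) (x : Fin 2 → ℝ) : M.mulVec x 1 = M 1 0 * x 0 + M 1 1 * x 1 := by
  simp [Matrix.mulVec, dotProduct, Fin.sum_univ_two]

lemma vec_ne_zero_iff (x : Fin 2 → ℝ) : x ≠ 0 ↔ (x 0 ≠ 0 ∨ x 1 ≠ 0) := by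
  constructor
  · intro hx
    by_contra h
    push_neg at h
    exact hx (funext fun i => by fin_cases i <;> simp [h.1, h.2])
  · rintro (h | h) rfl <;> simp at h

/-- parallel lemma -/
lemma exists_smul_of_cross_eq_zero {u v : Fin 2 → ℝ} (h : cross u v = 0) (hu : u ≠ 0) :
    ∃ t : ℝ, v = t • u := by
  rw [vec_ne_zero_iff] at hu
  unfold cross at h
  rcases hu with h0 | h1
  · refine ⟨v 0 / u 0, funext fun i => ?_⟩
    fin_cases i <;> simp [Pi.smul_apply] <;> field_simp <;> linarith
  · refine ⟨v 1 / u 1, funext fun i => ?_⟩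
    fin_cases i <;> simp [Pi.smul_apply] <;> field_simp <;> linarith

/-- Cramer: singular action -/
lemma det_eq_zero_of_mulVec_eq_zero {M : Mat} {x : Fin 2 → ℝ} (h : M.mulVec x = 0)
    (hx : x ≠ 0) : M.det = 0 := by
  have h0 := congrFun h 0
  have h1 := congrFun h 1
  rw [mulVec0] at h0
  rw [mulVec1] at h1
  simp only [Pi.zero_apply] at h0 h1
  rw [Matrix.det_fin_two]
  rw [vec_ne_zero_iff] at hx
  rcases hx with hx | hx
  · have : (M 0 0 * M 1 1 - M 0 1 * M 1 0) * x 0 = 0 := by linear_combination M 1 1 * h0 - M 0 1 * h1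
    exact (mul_eq_zero.mp this).resolve_right hx
  · have : (M 0 0 * M 1 1 - M 0 1 * M 1 0) * x 1 = 0 := by linear_combination M 0 0 * h1 - M 1 0 * h0
    exact (mul_eq_zero.mp this).resolve_right hx

/-- kernel vector of a singular matrix -/
lemma exists_mulVec_eq_zero_of_det_eq_zero {M : Mat} (h : M.det = 0) :
    ∃ x : Fin 2 → ℝ, x ≠ 0 ∧ M.mulVec x = 0 := by
  rw [Matrix.det_fin_two] at h
  by_cases h1 : M 1 1 ≠ 0 ∨ M 1 0 ≠ 0
  · refine ⟨![M 1 1, -M 1 0], ?_, ?_⟩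
    · rw [vec_ne_zero_iff]
      simpa using h1.imp id (fun h => by simpa using neg_ne_zero.mpr h)
    · funext i
      fin_cases i <;> simp [mulVec0, mulVec1] <;> linarith
  by_cases h2 : M 0 1 ≠ 0 ∨ M 0 0 ≠ 0
  · refine ⟨![M 0 1, -M 0 0], ?_, ?_⟩
    · rw [vec_ne_zero_iff]
      simpa using h2.imp id (fun h => by simpa using neg_ne_zero.mpr h)
    · funext i
      fin_cases i <;> simp [mulVec0, mulVec1] <;> linarith
  · push_neg at h1 h2
    refine ⟨![1, 0], by rw [vec_ne_zero_iff]; simp, ?_⟩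
    funext i
    fin_cases i <;> simp [mulVec0, mulVec1, h1.1, h1.2, h2.1, h2.2]

/-- pencil determinant identity -/
lemma det_pencil (A B : Mat) (a b : ℝ) :
    (a • A + b • B).det =
      a ^ 2 * A.det + a * b * Matrix.trace (A.adjugate * B) + b ^ 2 * B.det := by
  simp [Matrix.det_fin_two, Matrix.adjugate_fin_two, Matrix.trace_fin_two, Matrix.mul_apply,
    Fin.sum_univ_two, Matrix.add_apply, Matrix.smul_apply, Matrix.vecMul, dotProduct]
  ring

lemma det_adjugate_mul (A B : Mat) : (A.adjugate * B).det = A.det * B.det := by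
  simp [Matrix.det_fin_two, Matrix.adjugate_fin_two, Matrix.mul_apply, Fin.sum_univ_two,
    Matrix.vecMul, dotProduct]
  ring


/-- cross of combinations -/
lemma cross_combo (M N : Mat) (a b c d : ℝ) (x : Fin 2 → ℝ) :
    cross (((a • M + b • N)).mulVec x) ((c • M + d • N).mulVec x)
      = (a * d - b * c) * cross (M.mulVec x) (N.mulVec x) := by
  simp only [cross, Matrix.add_mulVec, Matrix.smul_mulVec, Pi.add_apply, Pi.smul_apply,
    smul_eq_mul]
  ring

lemma cross_smul_right (v y : Fin 2 → ℝ) (t : ℝ) : cross v (t • y) = t * cross v y := by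
  simp only [cross, Pi.smul_apply, smul_eq_mul]; ring

lemma cross_smul_smul (v y : Fin 2 → ℝ) (s t : ℝ) : cross (s • v) (t • v) = 0 := by
  simp only [cross, Pi.smul_apply, smul_eq_mul]; ring

/-- trace identity -/
lemma cross_trace (U : Mat) (v u : Fin 2 → ℝ) :
    cross v (U.mulVec u) - cross u (U.mulVec v) = U.trace * cross v u := by
  simp only [cross, Matrix.trace_fin_two, Matrix.mulVec, dotProduct, Fin.sum_univ_two]
  ring

/-- basis decomposition identity -/
lemma basis_decomp (v u y : Fin 2 → ℝ) (hD : cross v u ≠ 0) :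
    y = ((-(cross u y)) / cross v u) • v + ((cross v y) / cross v u) • u := by
  funext i
  fin_cases i <;>
  · simp only [cross, Pi.add_apply, Pi.smul_apply, smul_eq_mul, Fin.zero_eta, Fin.mk_one] at *
    rw [div_mul_eq_mul_div, div_mul_eq_mul_div, ← add_div, eq_div_iff hD]
    ring


lemma mat_ext_iff (M : Mat) : M = 0 ↔ M 0 0 = 0 ∧ M 0 1 = 0 ∧ M 1 0 = 0 ∧ M 1 1 = 0 := by
  constructor
  · rintro rfl; simp
  · rintro ⟨h1, h2, h3, h4⟩
    ext i j
    fin_cases i <;> fin_cases j <;> simpa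

lemma mul_entry (M N : Mat) (i j : Fin 2) :
    (M * N) i j = M i 0 * N 0 j + M i 1 * N 1 j := by
  simp [Matrix.mul_apply, Fin.sum_univ_two]

/-- commuting independent traceless matrices: dependence witness -/
lemma comm_dep {U W : Mat} (hU : Matrix.trace U = 0) (hW : Matrix.trace W = 0)
    (hc : U * W = W * U) :
    ∃ s t : ℝ, ¬(s = 0 ∧ t = 0) ∧ s • U + t • W = 0 := by
  rw [Matrix.trace_fin_two] at hU hW
  have hU11 : U 1 1 = -U 0 0 := by linarith
  have hW11 : W 1 1 = -W 0 0 := by linarith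
  set a := U 0 0; set b := U 0 1; set c := U 1 0
  set d := W 0 0; set e := W 0 1; set f := W 1 0
  have h00 := congrFun (congrFun hc 0) 0
  have h01 := congrFun (congrFun hc 0) 1
  have h10 := congrFun (congrFun hc 1) 0
  rw [mul_entry, mul_entry] at h00 h01 h10
  rw [hU11, hW11] at h01 h10
  have e1 : b * f = c * e := by linarith
  have e2 : a * e = b * d := by linarith
  have e3 : c * d = a * f := by linarith
  have key : ∀ s t : ℝ, s * a + t * d = 0 → s * b + t * e = 0 → s * c + t * f = 0 →
      s • U + t • W = 0 := by
    intro s t k1 k2 k3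
    refine (mat_ext_iff _).mpr ⟨?_, ?_, ?_, ?_⟩ <;>
      simp only [Matrix.add_apply, Matrix.smul_apply, smul_eq_mul] <;>
      first
        | exact k1
        | exact k2
        | exact k3
        | (rw [hU11, hW11]; linarith)
  by_cases ha : a ≠ 0
  · exact ⟨d, -a, fun h => ha (neg_eq_zero.mp h.2), key d (-a) (by ring) (by linarith) (by linarith)⟩
  by_cases hb : b ≠ 0
  · exact ⟨e, -b, fun h => hb (neg_eq_zero.mp h.2), key e (-b) (by linarith) (by ring) (by linarith)⟩
  by_cases hcn : c ≠ 0
  · exact ⟨f, -c, fun h => hcn (neg_eq_zero.mp h.2), key f (-c) (by linarith) (by linarith) (by ring)⟩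
  · push_neg at ha hb hcn
    refine ⟨1, 0, by simp, ?_⟩
    have hU0 : U = 0 := (mat_ext_iff U).mpr ⟨ha, hb, hcn, by rw [hU11, ha]; ring⟩
    rw [hU0]; simp

/-- traceless with traceless square is square-zero -/
lemma sq_eq_zero {W : Mat} (hW : Matrix.trace W = 0) (hW2 : Matrix.trace (W * W) = 0) :
    W * W = 0 := by
  rw [Matrix.trace_fin_two] at hW
  have hW11 : W 1 1 = -W 0 0 := by linarith
  rw [Matrix.trace_fin_two, mul_entry, mul_entry] at hW2
  rw [hW11] at hW2
  refine (mat_ext_iff _).mpr ⟨?_, ?_, ?_, ?_⟩ <;>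
  · rw [mul_entry]
    try rw [hW11]
    nlinarith [hW2, hW11]

/-- kernel of nonzero traceless singular matrix is 1-dimensional -/
lemma ker_cross {W : Mat} {v y : Fin 2 → ℝ} (hW : W ≠ 0) (htr : Matrix.trace W = 0)
    (hv : W.mulVec v = 0) (hy : W.mulVec y = 0) : cross v y = 0 := by
  rw [Matrix.trace_fin_two] at htr
  have hW11 : W 1 1 = -W 0 0 := by linarith
  have hv0 := congrFun hv 0
  have hv1 := congrFun hv 1
  have hy0 := congrFun hy 0
  have hy1 := congrFun hy 1
  rw [mulVec0] at hv0 hy0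
  rw [mulVec1] at hv1 hy1
  rw [hW11] at hv1 hy1
  simp only [Pi.zero_apply] at hv0 hv1 hy0 hy1
  have hne : W 0 0 ≠ 0 ∨ W 0 1 ≠ 0 ∨ W 1 0 ≠ 0 := by
    by_contra h
    push_neg at h
    exact hW ((mat_ext_iff W).mpr ⟨h.1, h.2.1, h.2.2, by rw [hW11, h.1]; ring⟩)
  unfold cross
  rcases hne with h | h | h
  · have : W 0 0 * (v 0 * y 1 - v 1 * y 0) = 0 := by linear_combination y 1 * hv0 - v 1 * hy0
    exact (mul_eq_zero.mp this).resolve_left h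
  · have : W 0 1 * (v 0 * y 1 - v 1 * y 0) = 0 := by linear_combination v 0 * hy0 - y 0 * hv0
    exact (mul_eq_zero.mp this).resolve_left h
  · have : W 1 0 * (v 0 * y 1 - v 1 * y 0) = 0 := by linear_combination y 1 * hv1 - v 1 * hy1
    exact (mul_eq_zero.mp this).resolve_left h



lemma cross_add_right (v x y : Fin 2 → ℝ) : cross v (x + y) = cross v x + cross v y := by
  simp only [cross, Pi.add_apply]; ring

lemma cross_self (v : Fin 2 → ℝ) : cross v v = 0 := by
  simp only [cross]; ring

lemma cross_antisymm (v u : Fin 2 → ℝ) : cross u v = -cross v u := by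
  simp only [cross]; ring

lemma indep_coeffs {u v : Fin 2 → ℝ} (h : cross u v ≠ 0) {s t : ℝ}
    (hst : s • u + t • v = 0) : s = 0 ∧ t = 0 := by
  have h0 := congrFun hst 0
  have h1 := congrFun hst 1
  simp only [Pi.add_apply, Pi.smul_apply, smul_eq_mul, Pi.zero_apply] at h0 h1
  constructor
  · have : s * cross u v = 0 := by
      simp only [cross]
      linear_combination v 1 * h0 - v 0 * h1
    exact (mul_eq_zero.mp this).resolve_right h
  · have : t * cross u v = 0 := by
      simp only [cross]
      linear_combination u 0 * h1 - u 1 * h0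
    exact (mul_eq_zero.mp this).resolve_right h

lemma sl2_rank : Module.finrank ℝ (LinearMap.ker (Matrix.traceLinearMap (Fin 2) ℝ ℝ)) = 3 := by
  have hsurj : LinearMap.range (Matrix.traceLinearMap (Fin 2) ℝ ℝ) = ⊤ := by
    rw [LinearMap.range_eq_top]
    intro r
    exact ⟨Matrix.diagonal ![r, 0], by
      rw [Matrix.traceLinearMap_apply, Matrix.trace_fin_two]; simp⟩
  have h := LinearMap.finrank_range_add_finrank_ker (Matrix.traceLinearMap (Fin 2) ℝ ℝ)
  rw [hsurj, finrank_top, Module.finrank_self] at h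
  have h4 : Module.finrank ℝ (Matrix (Fin 2) (Fin 2) ℝ) = 4 := by
    rw [Module.finrank_matrix]; simp
  rw [h4] at h
  omega

lemma disc_neg_of_cross (A B : Mat)
    (h : ∀ x : Fin 2 → ℝ, x ≠ 0 → cross (A.mulVec x) (B.mulVec x) ≠ 0) :
    (Matrix.trace (A.adjugate * B)) ^ 2 - 4 * (A.adjugate * B).det < 0 := by
  rw [det_adjugate_mul]
  set a := A.det with ha
  set b := Matrix.trace (A.adjugate * B) with hb
  set c := B.det with hc
  by_contra hd
  push_neg at hd
  -- disc ≥ 0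
  have hA : a ≠ 0 := by
    intro ha0
    obtain ⟨x, hx, hMx⟩ := exists_mulVec_eq_zero_of_det_eq_zero (ha ▸ ha0)
    exact h x hx (by simp [cross, hMx])
  set s := Real.sqrt (b ^ 2 - 4 * (a * c)) with hs
  have hs2 : s ^ 2 = b ^ 2 - 4 * (a * c) := Real.sq_sqrt (by linarith)
  set t := (-b + s) / (2 * a) with ht
  have hroot : (t • A + (1 : ℝ) • B).det = 0 := by
    rw [det_pencil]
    rw [← ha, ← hb, ← hc]
    have : a * t ^ 2 + t * b + c = 0 := by
      rw [ht]
      field_simp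
      nlinarith [hs2]
    nlinarith [this]
  obtain ⟨x, hx, hMx⟩ := exists_mulVec_eq_zero_of_det_eq_zero hroot
  apply h x hx
  have hBx : B.mulVec x = (-t) • A.mulVec x := by
    have : t • A.mulVec x + B.mulVec x = 0 := by
      rw [← Matrix.smul_mulVec, ← Matrix.add_mulVec] at *
      simpa using hMx
    funext i
    have := congrFun this i
    simp only [Pi.add_apply, Pi.smul_apply, smul_eq_mul, Pi.zero_apply, neg_smul] at *
    linarith
  rw [hBx]
  simp [cross, Pi.smul_apply]
  ring

lemma cross_ne_of_disc_neg (A B : Mat)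
    (h : (Matrix.trace (A.adjugate * B)) ^ 2 - 4 * (A.adjugate * B).det < 0) :
    ∀ x : Fin 2 → ℝ, x ≠ 0 → cross (A.mulVec x) (B.mulVec x) ≠ 0 := by
  rw [det_adjugate_mul] at h
  intro x hx hcr
  -- get (α, β) ≠ 0 with α Ax + β Bx = 0
  obtain ⟨α, β, hab, hzero⟩ :
      ∃ α β : ℝ, ¬(α = 0 ∧ β = 0) ∧ α • A.mulVec x + β • B.mulVec x = 0 := by
    by_cases hAx : A.mulVec x = 0
    · exact ⟨1, 0, by simp, by simp [hAx]⟩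
    · obtain ⟨t, htv⟩ := exists_smul_of_cross_eq_zero hcr hAx
      exact ⟨t, -1, by simp, by simp [htv]⟩
  have hdet : (α • A + β • B).det = 0 := by
    apply det_eq_zero_of_mulVec_eq_zero _ hx
    rw [Matrix.add_mulVec, Matrix.smul_mulVec, Matrix.smul_mulVec]
    exact hzero
  rw [det_pencil] at hdet
  set a := A.det
  set b := Matrix.trace (A.adjugate * B)
  set c := B.det
  by_cases hβ : β = 0
  · have hα : α ≠ 0 := fun hα => hab ⟨hα, hβ⟩
    rw [hβ] at hdet
    have haz : a = 0 := by
      have : a * α ^ 2 = 0 := by linarith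
      rcases mul_eq_zero.mp this with h | h
      · exact h
      · exact absurd (pow_eq_zero_iff (by norm_num) |>.mp h) hα
    rw [haz] at h
    nlinarith [sq_nonneg b]
  · have key : (2 * a * α + b * β) ^ 2 = (b ^ 2 - 4 * (a * c)) * β ^ 2 := by
      linear_combination 4 * a * hdet
    nlinarith [sq_nonneg (2 * a * α + b * β), sq_pos_of_ne_zero hβ,
      mul_neg_of_neg_of_pos h (sq_pos_of_ne_zero hβ)]


lemma span_eq_top_iff (G : Mat → Prop) (x : Fin 2 → ℝ) :
    Submodule.span ℝ {y : Fin 2 → ℝ | ∃ M, G M ∧ y = M.mulVec x} = ⊤ ↔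
      ∃ M, G M ∧ ∃ N, G N ∧ cross (M.mulVec x) (N.mulVec x) ≠ 0 := by
  constructor
  · intro htop
    by_contra hno
    push_neg at hno
    -- every two vectors in the set are parallel
    have hpar : ∀ M, G M → ∀ N, G N → cross (M.mulVec x) (N.mulVec x) = 0 := fun M hM N hN =>
      hno M hM N hN
    -- find w such that the whole set lies in span {w}
    obtain ⟨w, hw⟩ : ∃ w : Fin 2 → ℝ,
        {y : Fin 2 → ℝ | ∃ M, G M ∧ y = M.mulVec x} ⊆ ↑(Submodule.span ℝ ({w} : Set (Fin 2 → ℝ))) := by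
      by_cases hz : ∃ M, G M ∧ M.mulVec x ≠ 0
      · obtain ⟨M₀, hM₀, hM₀x⟩ := hz
        refine ⟨M₀.mulVec x, ?_⟩
        rintro y ⟨N, hN, rfl⟩
        obtain ⟨t, ht⟩ := exists_smul_of_cross_eq_zero (hpar M₀ hM₀ N hN) hM₀x
        rw [ht]
        exact Submodule.smul_mem _ _ (Submodule.mem_span_singleton_self _)
      · push_neg at hz
        refine ⟨0, ?_⟩
        rintro y ⟨N, hN, rfl⟩
        rw [hz N hN]
        exact Submodule.zero_mem _
    have hle : (⊤ : Submodule ℝ (Fin 2 → ℝ)) ≤ Submodule.span ℝ {w} := by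
      rw [← htop]
      exact Submodule.span_le.mpr hw
    obtain ⟨s, hs⟩ := Submodule.mem_span_singleton.mp (hle (Submodule.mem_top :
      (![1, 0] : Fin 2 → ℝ) ∈ ⊤))
    obtain ⟨t, ht⟩ := Submodule.mem_span_singleton.mp (hle (Submodule.mem_top :
      (![0, 1] : Fin 2 → ℝ) ∈ ⊤))
    have h0 : cross ![(1:ℝ), 0] ![(0:ℝ), 1] = 1 := by simp [cross]
    rw [← hs, ← ht] at h0
    simp only [cross, Pi.smul_apply, smul_eq_mul] at h0
    nlinarith [h0]
  · rintro ⟨M, hM, N, hN, hcr⟩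
    rw [Submodule.eq_top_iff']
    intro z
    set u := M.mulVec x
    set v := N.mulVec x
    have hu : u ∈ {y : Fin 2 → ℝ | ∃ M, G M ∧ y = M.mulVec x} := ⟨M, hM, rfl⟩
    have hv : v ∈ {y : Fin 2 → ℝ | ∃ M, G M ∧ y = M.mulVec x} := ⟨N, hN, rfl⟩
    have hz : z = ((z 0 * v 1 - z 1 * v 0) / cross u v) • u
        + ((u 0 * z 1 - u 1 * z 0) / cross u v) • v := by
      funext i
      fin_cases i <;>
      · simp only [cross, Pi.add_apply, Pi.smul_apply, smul_eq_mul, Fin.zero_eta, Fin.mk_one] at *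
        rw [div_mul_eq_mul_div, div_mul_eq_mul_div, ← add_div, eq_div_iff hcr]
        ring
    rw [hz]
    exact Submodule.add_mem _
      (Submodule.smul_mem _ _ (Submodule.subset_span hu))
      (Submodule.smul_mem _ _ (Submodule.subset_span hv))


/-- Structure of the Borel situation: eigenvectors -/
lemma borel_data {U₁ W₁ : Mat} {κ : ℝ} (hκ : κ ≠ 0)
    (htrU : Matrix.trace U₁ = 0) (htrW : Matrix.trace W₁ = 0)
    (hbr : U₁ * W₁ - W₁ * U₁ = κ • W₁) (hWne : W₁ ≠ 0) :
    ∃ v u : Fin 2 → ℝ, v ≠ 0 ∧ cross v u ≠ 0 ∧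
      U₁.mulVec v = (κ/2 : ℝ) • v ∧ W₁.mulVec v = 0 ∧
      U₁.mulVec u = (-(κ/2) : ℝ) • u := by
  -- W₁ squares to zero
  have htr2 : Matrix.trace (W₁ * W₁) = 0 := by
    have h1 : κ • (W₁ * W₁) = (U₁ * W₁ - W₁ * U₁) * W₁ := by
      rw [hbr, Matrix.smul_mul]
    have h2 : κ * Matrix.trace (W₁ * W₁) = 0 := by
      have h2' := congrArg Matrix.trace h1
      rw [Matrix.trace_smul, smul_eq_mul, Matrix.sub_mul, Matrix.trace_sub,
        Matrix.trace_mul_comm (W₁ * U₁) W₁, ← mul_assoc, Matrix.trace_mul_comm (W₁ * W₁) U₁,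
        ← mul_assoc, sub_self] at h2'
      exact h2'
    rcases mul_eq_zero.mp h2 with h | h
    · exact absurd h hκ
    · exact h
  have hW2 : W₁ * W₁ = 0 := sq_eq_zero htrW htr2
  -- pick u₂ with W₁ u₂ ≠ 0
  obtain ⟨u₂, hu₂⟩ : ∃ u₂ : Fin 2 → ℝ, W₁.mulVec u₂ ≠ 0 := by
    by_contra h
    push_neg at h
    have h1 := h ![1, 0]
    have h2 := h ![0, 1]
    apply hWne
    rw [mat_ext_iff]
    refine ⟨?_, ?_, ?_, ?_⟩
    · have := congrFun h1 0; rw [mulVec0] at this; simpa using this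
    · have := congrFun h2 0; rw [mulVec0] at this; simpa using this
    · have := congrFun h1 1; rw [mulVec1] at this; simpa using this
    · have := congrFun h2 1; rw [mulVec1] at this; simpa using this
  set v := W₁.mulVec u₂ with hvdef
  have hWv : W₁.mulVec v = 0 := by
    rw [hvdef, Matrix.mulVec_mulVec, hW2]
    simp
  -- U₁ v is parallel to v
  have hWU₁v : W₁.mulVec (U₁.mulVec v) = 0 := by
    rw [Matrix.mulVec_mulVec]
    have h3 : W₁ * U₁ = U₁ * W₁ - κ • W₁ := by
      have h := hbr
      rw [sub_eq_iff_eq_add] at h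
      rw [h]; abel
    rw [h3, Matrix.sub_mulVec, ← Matrix.mulVec_mulVec, hWv, Matrix.smul_mulVec, hWv]
    simp
  obtain ⟨lam, hlam⟩ := exists_smul_of_cross_eq_zero (ker_cross hWne htrW hWv hWU₁v) hu₂
  -- independence of v and u₂
  have hD : cross v u₂ ≠ 0 := by
    intro h
    obtain ⟨t, ht⟩ := exists_smul_of_cross_eq_zero h hu₂
    apply hu₂
    show W₁.mulVec u₂ = 0
    rw [ht, Matrix.mulVec_smul, hWv, smul_zero]
  set D := cross v u₂ with hDdef
  set ξ := -(cross u₂ (U₁.mulVec u₂)) / D with hxidef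
  set η := cross v (U₁.mulVec u₂) / D with hetadef
  have hdec : U₁.mulVec u₂ = ξ • v + η • u₂ := basis_decomp v u₂ _ hD
  -- η = -lam
  have htrace := cross_trace U₁ v u₂
  rw [htrU, zero_mul, sub_eq_zero] at htrace
  have hcv : cross u₂ (U₁.mulVec v) = -(lam * D) := by
    rw [hlam, cross_smul_right, cross_antisymm v u₂]
    ring
  have heta : η = -lam := by
    rw [hetadef, htrace, hcv]
    field_simp
  -- bracket applied to u₂ : lam - η = κ
  have hbru : U₁.mulVec (W₁.mulVec u₂) - W₁.mulVec (U₁.mulVec u₂) = κ • W₁.mulVec u₂ := by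
    rw [Matrix.mulVec_mulVec, Matrix.mulVec_mulVec, ← Matrix.sub_mulVec, hbr,
      Matrix.smul_mulVec]
  rw [hdec] at hbru
  have hbru2 : (lam - η - κ) • v = 0 := by
    rw [Matrix.mulVec_add, Matrix.mulVec_smul, Matrix.mulVec_smul, hWv] at hbru
    rw [smul_zero, zero_add, hlam] at hbru
    rw [sub_smul, sub_smul, hbru]
    rw [← hvdef]
    module
  have hlamval : lam = κ/2 := by
    rcases smul_eq_zero.mp hbru2 with h | h
    · rw [heta] at h
      linarith [h]
    · exact absurd h hu₂
  have hetaval : η = -(κ/2) := by rw [heta, hlamval]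
  -- the second eigenvector
  refine ⟨v, u₂ + (-(ξ/κ)) • v, hu₂, ?_, ?_, hWv, ?_⟩
  · rw [cross_add_right, cross_smul_right, cross_self]
    simpa using hD
  · rw [hlam, hlamval]
  · rw [Matrix.mulVec_add, Matrix.mulVec_smul, hdec, hlam, hlamval, hetaval]
    match_scalars <;> field_simp <;> ring

lemma borel_kill {U₁ W₁ M : Mat} {κ : ℝ} (hκ : κ ≠ 0) {v u : Fin 2 → ℝ} (hD : cross v u ≠ 0)
    (hUv : U₁.mulVec v = (κ/2 : ℝ) • v) (hWv : W₁.mulVec v = 0)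
    (hUu : U₁.mulVec u = (-(κ/2) : ℝ) • u)
    {p q : ℝ} (hbrM : M * U₁ - U₁ * M = p • U₁ + q • W₁) :
    cross v (M.mulVec v) = 0 := by
  have hdec := basis_decomp v u (M.mulVec v) hD
  set c := -(cross u (M.mulVec v)) / cross v u with hcdef
  set d := cross v (M.mulVec v) / cross v u with hddef
  have h1 : (κ/2 : ℝ) • (M.mulVec v) - U₁.mulVec (M.mulVec v) = (p * (κ/2)) • v := by
    have h0 : M.mulVec (U₁.mulVec v) - U₁.mulVec (M.mulVec v)
        = p • U₁.mulVec v + q • W₁.mulVec v := by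
      rw [Matrix.mulVec_mulVec, Matrix.mulVec_mulVec, ← Matrix.sub_mulVec, hbrM,
        Matrix.add_mulVec, Matrix.smul_mulVec, Matrix.smul_mulVec]
    rw [hUv, hWv, smul_zero, add_zero, Matrix.mulVec_smul, smul_smul] at h0
    exact h0
  rw [hdec, Matrix.mulVec_add, Matrix.mulVec_smul, Matrix.mulVec_smul, hUv, hUu] at h1
  have hkey : (κ * d) • u = (p * (κ/2)) • v := by
    rw [← h1]
    match_scalars <;> ring
  have hd0 : κ * d * cross v u = 0 := by
    have h2 := congrArg (cross v) hkey
    rw [cross_smul_right, cross_smul_right, cross_self, mul_zero] at h2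
    exact h2
  rcases mul_eq_zero.mp hd0 with h | h
  · rcases mul_eq_zero.mp h with h' | h'
    · exact absurd h' hκ
    · rw [hddef] at h'
      exact (div_eq_zero_iff.mp h').resolve_right hD
  · exact absurd h hD


end LarcAux

open LarcAux Matrix Module

attribute [local instance 100] LieRing.ofAssociativeRing

theorem larc_iff_exists_complex_eigenvalue (A B : Matrix (Fin 2) (Fin 2) ℝ) :
    (∀ x : Fin 2 → ℝ, x ≠ 0 →
      Submodule.span ℝ
        {y : Fin 2 → ℝ | ∃ M ∈ LieSubalgebra.lieSpan ℝ (Matrix (Fin 2) (Fin 2) ℝ)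
          {M | ∃ u : ℝ, M = A + u • B}, y = M.mulVec x} = ⊤) ↔
    (∃ A' ∈ LieSubalgebra.lieSpan ℝ (Matrix (Fin 2) (Fin 2) ℝ)
        {M | ∃ u : ℝ, M = A + u • B},
     ∃ B' ∈ LieSubalgebra.lieSpan ℝ (Matrix (Fin 2) (Fin 2) ℝ)
        {M | ∃ u : ℝ, M = A + u • B},
      (Matrix.trace (A'.adjugate * B')) ^ 2 - 4 * (A'.adjugate * B').det < 0) := by
  set L := LieSubalgebra.lieSpan ℝ (Matrix (Fin 2) (Fin 2) ℝ) {M | ∃ u : ℝ, M = A + u • B}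
    with hLdef
  constructor
  · -- hard direction
    intro hL
    have hLARC : ∀ x : Fin 2 → ℝ, x ≠ 0 → ∃ M, M ∈ L ∧ ∃ N, N ∈ L ∧
        cross (M.mulVec x) (N.mulVec x) ≠ 0 := by
      intro x hx
      exact (span_eq_top_iff (fun M => M ∈ L) x).mp (hL x hx)
    classical
    set sl2 : Submodule ℝ Mat := LinearMap.ker (Matrix.traceLinearMap (Fin 2) ℝ ℝ) with hsl2
    set H : Submodule ℝ Mat := L.toSubmodule ⊓ sl2 with hH
    have hmemH : ∀ M : Mat, M ∈ H ↔ (M ∈ L ∧ Matrix.trace M = 0) := by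
      intro M
      rw [hH, Submodule.mem_inf, hsl2, LinearMap.mem_ker, Matrix.traceLinearMap_apply]
      exact Iff.rfl
    have hsl2rank : finrank ℝ sl2 = 3 := sl2_rank
    have hHle : H ≤ sl2 := inf_le_right
    have hHrank : finrank ℝ H ≤ 3 := hsl2rank ▸ Submodule.finrank_mono hHle
    by_cases h3 : finrank ℝ H = 3
    · -- sl2 ⊆ L
      have hHeq : H = sl2 := Submodule.eq_of_le_of_finrank_le hHle (by omega)
      have hmem : ∀ M : Mat, Matrix.trace M = 0 → M ∈ L := by
        intro M hM
        have : M ∈ sl2 := by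
          rw [hsl2, LinearMap.mem_ker, Matrix.traceLinearMap_apply]
          exact hM
        rw [← hHeq, hmemH] at this
        exact this.1
      refine ⟨!![1, 0; 0, -1], hmem _ (by rw [Matrix.trace_fin_two]; norm_num),
        !![0, 1; 1, 0], hmem _ (by rw [Matrix.trace_fin_two]; norm_num), ?_⟩
      norm_num [Matrix.adjugate_fin_two, Matrix.trace_fin_two, Matrix.det_fin_two,
        Matrix.mul_apply, Fin.sum_univ_two]
    · by_cases h2 : finrank ℝ H = 2
      · -- Borel case : contradiction
        exfalso
        have : FiniteDimensional ℝ ↥H := inferInstance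
        let b : Basis (Fin 2) ℝ ↥H := Module.finBasisOfFinrankEq ℝ ↥H h2
        set U₀ : Mat := ((b 0 : ↥H) : Mat) with hU₀
        set W₀ : Mat := ((b 1 : ↥H) : Mat) with hW₀
        have hU₀H : U₀ ∈ H := (b 0).2
        have hW₀H : W₀ ∈ H := (b 1).2
        have hspan : ∀ h : Mat, h ∈ H → ∃ s t : ℝ, h = s • U₀ + t • W₀ := by
          intro h hh
          have hs := b.sum_repr ⟨h, hh⟩
          rw [Fin.sum_univ_two] at hs
          refine ⟨b.repr ⟨h, hh⟩ 0, b.repr ⟨h, hh⟩ 1, ?_⟩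
          have := congrArg (Subtype.val) hs
          simp only [Submodule.coe_add, Submodule.coe_smul] at this
          exact this.symm
        have hind : ∀ s t : ℝ, s • U₀ + t • W₀ = 0 → s = 0 ∧ t = 0 := by
          intro s t hst
          have hli := b.linearIndependent.map' H.subtype (Submodule.ker_subtype H)
          have := Fintype.linearIndependent_iff.mp hli ![s, t] (by
            rw [Fin.sum_univ_two]
            simpa using hst)
          exact ⟨this 0, this 1⟩
        -- the commutator
        set C : Mat := U₀ * W₀ - W₀ * U₀ with hCdef
        have hCL : C ∈ L := by
          have := L.lie_mem ((hmemH U₀).mp hU₀H).1 ((hmemH W₀).mp hW₀H).1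
          rwa [Ring.lie_def] at this
        have hCtr : Matrix.trace C = 0 := by
          rw [hCdef, Matrix.trace_sub, Matrix.trace_mul_comm, sub_self]
        obtain ⟨α, β, hC⟩ := hspan C ((hmemH C).mpr ⟨hCL, hCtr⟩)
        have hCne : C ≠ 0 := by
          intro hC0
          obtain ⟨s, t, hst, hdep⟩ := comm_dep ((hmemH U₀).mp hU₀H).2 ((hmemH W₀).mp hW₀H).2
            (by rw [← sub_eq_zero]; exact hC0)
          exact hst ⟨(hind s t hdep).1, (hind s t hdep).2⟩
        have htrU₀ := ((hmemH U₀).mp hU₀H).2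
        have htrW₀ := ((hmemH W₀).mp hW₀H).2
        -- brackets with C
        have hbrUC : U₀ * C - C * U₀ = β • C := by
          calc U₀ * C - C * U₀
              = U₀ * (α • U₀ + β • W₀) - (α • U₀ + β • W₀) * U₀ := by rw [← hC]
            _ = β • (U₀ * W₀ - W₀ * U₀) := by
                rw [Matrix.mul_add, Matrix.add_mul, Matrix.mul_smul, Matrix.smul_mul,
                  Matrix.mul_smul, Matrix.smul_mul, smul_sub]
                abel
            _ = β • C := by rw [← hCdef]
        have hbrWC : (-W₀) * C - C * (-W₀) = α • C := by
          calc (-W₀) * C - C * (-W₀)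
              = -(W₀ * (α • U₀ + β • W₀)) + (α • U₀ + β • W₀) * W₀ := by
                rw [← hC, Matrix.neg_mul, Matrix.mul_neg]
                abel
            _ = α • (U₀ * W₀ - W₀ * U₀) := by
                rw [Matrix.mul_add, Matrix.add_mul, Matrix.mul_smul, Matrix.smul_mul,
                  Matrix.mul_smul, Matrix.smul_mul, smul_sub]
                abel
            _ = α • C := by rw [← hCdef]
        -- choose the normalized pair
        obtain ⟨U₁, κ, hκ, hU₁L, htrU₁, hbr₁, hsp₁⟩ :
            ∃ (U₁ : Mat) (κ : ℝ), κ ≠ 0 ∧ U₁ ∈ L ∧ Matrix.trace U₁ = 0 ∧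
              U₁ * C - C * U₁ = κ • C ∧
              (∀ h : Mat, h ∈ H → ∃ p q : ℝ, h = p • U₁ + q • C) := by
          by_cases hβ : β = 0
          · have hα : α ≠ 0 := by
              intro hα
              apply hCne
              rw [hC, hα, hβ, zero_smul, zero_smul, add_zero]
            refine ⟨-W₀, α, hα, L.toSubmodule.neg_mem ((hmemH W₀).mp hW₀H).1,
              by rw [Matrix.trace_neg, htrW₀, neg_zero], hbrWC, ?_⟩
            intro h hh
            obtain ⟨s, t, hst⟩ := hspan h hh
            refine ⟨-t, s / α, ?_⟩
            rw [hst, hC, hβ]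
            match_scalars <;> field_simp <;> ring
          · refine ⟨U₀, β, hβ, ((hmemH U₀).mp hU₀H).1, htrU₀, hbrUC, ?_⟩
            intro h hh
            obtain ⟨s, t, hst⟩ := hspan h hh
            refine ⟨s - t * α / β, t / β, ?_⟩
            rw [hst, hC]
            match_scalars <;> field_simp <;> ring
        obtain ⟨v, u, hv, hD, hUv, hWv, hUu⟩ := borel_data hκ htrU₁ hCtr hbr₁ hCne
        -- every element of L fixes the line through v
        have hfix : ∀ M : Mat, M ∈ L → cross v (M.mulVec v) = 0 := by
          intro M hM
          have hBM : M * U₁ - U₁ * M ∈ H := by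
            refine (hmemH _).mpr ⟨?_, ?_⟩
            · have := L.lie_mem hM hU₁L
              rwa [Ring.lie_def] at this
            · rw [Matrix.trace_sub, Matrix.trace_mul_comm, sub_self]
          obtain ⟨p, q, hpq⟩ := hsp₁ _ hBM
          exact borel_kill hκ hD hUv hWv hUu hpq
        obtain ⟨M, hM, N, hN, hMN⟩ := hLARC v hv
        obtain ⟨s, hs⟩ := exists_smul_of_cross_eq_zero (hfix M hM) hv
        obtain ⟨t, ht⟩ := exists_smul_of_cross_eq_zero (hfix N hN) hv
        rw [hs, ht] at hMN
        exact hMN (cross_smul_smul v v s t)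
      · -- low-dimensional case
        have hH1 : finrank ℝ H ≤ 1 := by omega
        have hLrank : finrank ℝ L.toSubmodule ≤ 2 := by
          set f := (Matrix.traceLinearMap (Fin 2) ℝ ℝ).comp L.toSubmodule.subtype with hf
          have hrn := LinearMap.finrank_range_add_finrank_ker f
          have hker : Submodule.map L.toSubmodule.subtype (LinearMap.ker f) = H := by
            ext M
            simp only [Submodule.mem_map, LinearMap.mem_ker, hf, LinearMap.comp_apply,
              Submodule.coe_subtype, Matrix.traceLinearMap_apply]
            constructor
            · rintro ⟨⟨N, hN⟩, hNtr, rfl⟩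
              exact (hmemH _).mpr ⟨hN, hNtr⟩
            · intro hM
              exact ⟨⟨M, ((hmemH M).mp hM).1⟩, ((hmemH M).mp hM).2, rfl⟩
          have hkerrank : finrank ℝ (LinearMap.ker f) ≤ 1 := by
            rw [← Submodule.finrank_map_subtype_eq L.toSubmodule (LinearMap.ker f), hker]
            exact hH1
          have hrange : finrank ℝ (LinearMap.range f) ≤ 1 := by
            have := Submodule.finrank_le (LinearMap.range f)
            rwa [Module.finrank_self] at this
          omega
        -- get two elements spanning L
        obtain ⟨M, hM, N, hN, hMN⟩ := hLARC ![1, 0] (by rw [vec_ne_zero_iff]; norm_num)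
        have hli : LinearIndependent ℝ ![M, N] := by
          rw [Fintype.linearIndependent_iff]
          intro g hg
          rw [Fin.sum_univ_two] at hg
          simp only [Matrix.cons_val_zero, Matrix.cons_val_one, Matrix.head_cons] at hg
          have hg' : g 0 • M.mulVec ![1, 0] + g 1 • N.mulVec ![1, 0] = 0 := by
            have := congrArg (fun P : Mat => P.mulVec ![1, 0]) hg
            simpa [Matrix.add_mulVec, Matrix.smul_mulVec] using this
          have := indep_coeffs hMN hg'
          intro i
          fin_cases i
          · exact this.1
          · exact this.2
        have hspanMN : Submodule.span ℝ {M, N} = L.toSubmodule := by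
          apply Submodule.eq_of_le_of_finrank_le
          · rw [Submodule.span_le]
            rintro P (rfl | rfl)
            · exact hM
            · exact hN
          · have : finrank ℝ (Submodule.span ℝ (Set.range ![M, N])) = 2 := by
              rw [finrank_span_eq_card hli]
              simp
            have hrange2 : Set.range ![M, N] = {M, N} := by
              simp only [Matrix.range_cons, Matrix.range_empty, Set.union_empty,
                Set.union_singleton]
              exact Set.pair_comm N M
            rw [hrange2] at this
            omega
        -- conclude with the pair M N
        refine ⟨M, hM, N, hN, disc_neg_of_cross M N ?_⟩
        intro x hx
        obtain ⟨M', hM', N', hN', hMN'⟩ := hLARC x hx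
        have hM'mem : M' ∈ Submodule.span ℝ {M, N} := by rw [hspanMN]; exact hM'
        have hN'mem : N' ∈ Submodule.span ℝ {M, N} := by rw [hspanMN]; exact hN'
        obtain ⟨a, b', haM⟩ := Submodule.mem_span_pair.mp hM'mem
        obtain ⟨c, d, hcN⟩ := Submodule.mem_span_pair.mp hN'mem
        rw [← haM, ← hcN, cross_combo] at hMN'
        intro h0
        rw [h0, mul_zero] at hMN'
        exact hMN' rfl
  · -- easy direction
    rintro ⟨A', hA', B', hB', hdisc⟩ x hx
    rw [span_eq_top_iff (fun M => M ∈ L) x]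
    exact ⟨A', hA', B', hB', cross_ne_of_disc_neg A' B' hdisc x hx⟩
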